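/- Let h(t) = max(1 − |t|, 0) be the hat function and let f = ∑_{k∈ℤ} c(k)·h(· − k) be a nonzero function in S_ℂ(h), where c : ℤ → ℂ. Set K₋ = inf{k ∈ ℤ : c(k) ≠ 0} and K₊ = sup{k ∈ ℤ : c(k) ≠ 0} (possibly ±∞). Then f is complex conjugate phase retrieval in S_ℂ(h) if and only if (i) c(k) ≠ 0 for every integer k with K₋ − 1 < k < K₊ + 1 (i.e. the support of c is an interval of integers), and (ii) there exists at most one integer k with K₋ − 1 < k < K₊ such that Im(c(k)·conj(c(k+1))) ≠ 0. -/

import Mathlib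

open Complex

/-- The hat function `h(t) = max (1 - |t|) 0`. -/
noncomputable def hatFun (t : ℝ) : ℝ := max (1 - |t|) 0

/-- The function `∑_{k ∈ ℤ} c k · h(· - k)` in the complex shift-invariant space
`S_ℂ(h)` generated by the hat function.  At every `t` at most two summands are nonzero,
so the (absolutely convergent) `tsum` coincides with the pointwise finite sum. -/
noncomputable def sisFun (c : ℤ → ℂ) : ℝ → ℂ :=
  fun t => ∑' k : ℤ, c k * (hatFun (t - k) : ℂ)

lemma hatFun_of_one_le {t : ℝ} (h : 1 ≤ |t|) : hatFun t = 0 := by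
  unfold hatFun; rw [max_eq_right]; linarith

lemma sisFun_eval (c : ℤ → ℂ) (n : ℤ) {s : ℝ} (h0 : 0 ≤ s) (h1 : s ≤ 1) :
    sisFun c ((n : ℝ) + s) = c n * ((1 - s : ℝ) : ℂ) + c (n+1) * (s : ℂ) := by
  unfold sisFun
  rw [tsum_eq_sum (s := {n, n+1})]
  · rw [Finset.sum_pair (by omega)]
    have e1 : (n : ℝ) + s - (n : ℤ) = s := by ring
    have e2 : (n : ℝ) + s - ((n+1 : ℤ)) = s - 1 := by push_cast; ring
    rw [e1, e2]
    have h1' : hatFun s = 1 - s := by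
      unfold hatFun; rw [_root_.abs_of_nonneg h0, max_eq_left]; linarith
    have h2' : hatFun (s - 1) = s := by
      unfold hatFun; rw [_root_.abs_of_nonpos (by linarith)]
      rw [max_eq_left (by linarith)]; ring_nf
    rw [h1', h2']
  · intro k hk
    simp only [Finset.mem_insert, Finset.mem_singleton] at hk
    push_neg at hk
    have : (1:ℝ) ≤ |(n : ℝ) + s - k| := by
      rcases lt_or_ge (k:ℝ) (n:ℝ) with h | h
      · have : (k:ℝ) ≤ (n:ℝ) - 1 := by
          have : k ≤ n - 1 := by exact_mod_cast Int.le_sub_one_of_lt (by exact_mod_cast h)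
          exact_mod_cast this
        rw [_root_.abs_of_nonneg (by linarith)]; linarith
      · have : (n:ℝ) + 2 ≤ (k:ℝ) := by
          have hkn : n ≤ k := by exact_mod_cast h
          have : n + 2 ≤ k := by
            rcases hk with ⟨h1, h2⟩
            omega
          exact_mod_cast this
        rw [_root_.abs_of_nonpos (by linarith)]; linarith
    rw [hatFun_of_one_le this]
    simp

lemma sisFun_int (c : ℤ → ℂ) (n : ℤ) : sisFun c n = c n := by
  have := sisFun_eval c n (s := 0) le_rfl zero_le_one
  simpa using this

lemma sisFun_eq_pt (c : ℤ → ℂ) (t : ℝ) :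
    sisFun c t = c ⌊t⌋ * ((1 - Int.fract t : ℝ):ℂ) + c (⌊t⌋+1) * ((Int.fract t : ℝ):ℂ) := by
  have := sisFun_eval c ⌊t⌋ (Int.fract_nonneg t) (Int.fract_lt_one t).le
  rwa [Int.floor_add_fract] at this

lemma sisFun_smul (c d : ℤ → ℂ) (z : ℂ) (h : ∀ j, d j = z * c j) :
    sisFun d = fun t => z * sisFun c t := by
  funext t
  rw [sisFun_eq_pt, sisFun_eq_pt, h, h]; ring

lemma sisFun_conj (c d : ℤ → ℂ) (z : ℂ) (h : ∀ j, d j = z * (starRingEnd ℂ) (c j)) :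
    sisFun d = fun t => z * (starRingEnd ℂ) (sisFun c t) := by
  funext t
  rw [sisFun_eq_pt, sisFun_eq_pt, h, h]
  simp only [map_add, map_mul, Complex.conj_ofReal]
  ring

lemma normSq_comb (a b : ℂ) (x y : ℝ) :
    Complex.normSq (a * (x:ℂ) + b * (y:ℂ))
      = Complex.normSq a * x^2 + Complex.normSq b * y^2
        + 2 * x * y * (a * (starRingEnd ℂ) b).re := by
  rw [Complex.normSq_add]
  simp only [Complex.normSq_mul, Complex.normSq_ofReal, map_mul, Complex.conj_ofReal]
  have : a * ↑x * ((starRingEnd ℂ) b * ↑y) = (a * (starRingEnd ℂ) b) * ((x*y : ℝ):ℂ) := by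
    push_cast; ring
  rw [this, mul_comm (a * (starRingEnd ℂ) b)]
  rw [Complex.re_ofReal_mul]
  ring

lemma abs_sisFun_eq (c d : ℤ → ℂ)
    (habs : ∀ k, ‖(d k)‖ = ‖(c k)‖)
    (hre : ∀ k, (d k * (starRingEnd ℂ) (d (k+1))).re = (c k * (starRingEnd ℂ) (c (k+1))).re) :
    ∀ t, ‖(sisFun d t)‖ = ‖(sisFun c t)‖ := by
  intro t
  rw [sisFun_eq_pt, sisFun_eq_pt, Complex.norm_def, Complex.norm_def,
    normSq_comb, normSq_comb]
  have e1 : Complex.normSq (d ⌊t⌋) = Complex.normSq (c ⌊t⌋) := by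
    rw [← Complex.sq_norm, ← Complex.sq_norm, habs]
  have e2 : Complex.normSq (d (⌊t⌋+1)) = Complex.normSq (c (⌊t⌋+1)) := by
    rw [← Complex.sq_norm, ← Complex.sq_norm, habs]
  rw [e1, e2, hre]

lemma coeff_abs_of_abs (c d : ℤ → ℂ)
    (h : ∀ t, ‖(sisFun d t)‖ = ‖(sisFun c t)‖) :
    ∀ k, ‖(d k)‖ = ‖(c k)‖ := by
  intro k
  have := h k
  rwa [sisFun_int, sisFun_int] at this

lemma coeff_re_of_abs (c d : ℤ → ℂ)
    (h : ∀ t, ‖(sisFun d t)‖ = ‖(sisFun c t)‖) :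
    ∀ k, (d k * (starRingEnd ℂ) (d (k+1))).re = (c k * (starRingEnd ℂ) (c (k+1))).re := by
  intro k
  have habs := coeff_abs_of_abs c d h
  have h2 := h ((k : ℝ) + (1/2 : ℝ))
  rw [sisFun_eval c k (by norm_num) (by norm_num),
      sisFun_eval d k (by norm_num) (by norm_num)] at h2
  have h2' : Complex.normSq (d k * ((1 - 1/2 : ℝ):ℂ) + d (k+1) * ((1/2:ℝ):ℂ))
      = Complex.normSq (c k * ((1 - 1/2 : ℝ):ℂ) + c (k+1) * ((1/2:ℝ):ℂ)) := by
    rw [← Complex.sq_norm, ← Complex.sq_norm, h2]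
  rw [normSq_comb, normSq_comb] at h2'
  have e1 : Complex.normSq (d k) = Complex.normSq (c k) := by
    rw [← Complex.sq_norm, ← Complex.sq_norm, habs]
  have e2 : Complex.normSq (d (k+1)) = Complex.normSq (c (k+1)) := by
    rw [← Complex.sq_norm, ← Complex.sq_norm, habs]
  rw [e1, e2] at h2'
  linarith

lemma dichotomy (w' w : ℂ) (habs : ‖w'‖ = ‖w‖)
    (hre : w'.re = w.re) : w' = w ∨ w' = (starRingEnd ℂ) w := by
  have hn : Complex.normSq w' = Complex.normSq w := by
    rw [← Complex.sq_norm, ← Complex.sq_norm, habs]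
  have him : w'.im * w'.im = w.im * w.im := by
    have := hn
    simp only [Complex.normSq_apply] at this
    rw [hre] at this
    linarith
  have : w'.im = w.im ∨ w'.im = -w.im := mul_self_eq_mul_self_iff.mp him
  rcases this with h | h
  · left; exact Complex.ext hre h
  · right; exact Complex.ext (by simpa using hre) (by simpa using h)

lemma Rlem (a b a' b' : ℂ) (ha : ‖a'‖ = ‖a‖)
    (hb : ‖b'‖ = ‖b‖)
    (h : a' * (starRingEnd ℂ) b' = a * (starRingEnd ℂ) b) : b' * a = b * a' := by
  by_cases ha0 : a = 0
  · have : a' = 0 := by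
      have := ha; rw [ha0] at this; simpa using this
    rw [ha0, this]; ring
  by_cases hb0 : b = 0
  · have : b' = 0 := by
      have := hb; rw [hb0] at this; simpa using this
    rw [hb0, this]; ring
  · have hnb : Complex.normSq b' = Complex.normSq b := by
      rw [← Complex.sq_norm, ← Complex.sq_norm, hb]
    have key : a' * (starRingEnd ℂ) b' * b' = a * (starRingEnd ℂ) b * b' := by rw [h]
    have e1 : a' * ((starRingEnd ℂ) b' * b') = a' * ((starRingEnd ℂ) b * b) := by
      rw [mul_comm ((starRingEnd ℂ) b') b', mul_comm ((starRingEnd ℂ) b) b,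
        Complex.mul_conj, Complex.mul_conj, hnb]
    have : a * (starRingEnd ℂ) b * b' = a' * (starRingEnd ℂ) b * b := by
      rw [← mul_assoc] at e1; rw [← key, e1]; ring
    have hcb : (starRingEnd ℂ) b ≠ 0 := by simpa using hb0
    exact mul_left_cancel₀ hcb (by linear_combination this)

lemma R'lem (a b a' b' : ℂ) (ha : ‖a'‖ = ‖a‖)
    (hb : ‖b'‖ = ‖b‖)
    (h : a' * (starRingEnd ℂ) b' = (starRingEnd ℂ) a * b) :
    b' * (starRingEnd ℂ) a = (starRingEnd ℂ) b * a' := by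
  by_cases ha0 : a = 0
  · have : a' = 0 := by have := ha; rw [ha0] at this; simpa using this
    rw [ha0, this]; simp
  by_cases hb0 : b = 0
  · have : b' = 0 := by have := hb; rw [hb0] at this; simpa using this
    rw [hb0, this]; simp
  · have hnb : Complex.normSq b' = Complex.normSq b := by
      rw [← Complex.sq_norm, ← Complex.sq_norm, hb]
    have key : a' * ((starRingEnd ℂ) b' * b') = (starRingEnd ℂ) a * b * b' := by
      rw [← mul_assoc, h]
    have e1 : (starRingEnd ℂ) b' * b' = (starRingEnd ℂ) b * b := by
      rw [mul_comm ((starRingEnd ℂ) b') b', mul_comm ((starRingEnd ℂ) b) b,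
        Complex.mul_conj, Complex.mul_conj, hnb]
    rw [e1] at key
    have := mul_right_cancel₀ hb0 (show (a' * (starRingEnd ℂ) b) * b = ((starRingEnd ℂ) a * b') * b by
      linear_combination key)
    linear_combination -this

lemma R'lem2 (a b a' b' : ℂ) (hR : b' * a = b * a')
    (hreal : a * (starRingEnd ℂ) b = (starRingEnd ℂ) a * b)
    (ha' : a = 0 → a' = 0) (hb' : b = 0 → b' = 0) :
    b' * (starRingEnd ℂ) a = (starRingEnd ℂ) b * a' := by
  by_cases ha0 : a = 0
  · rw [ha0, ha' ha0]; simp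
  by_cases hb0 : b = 0
  · rw [hb0, hb' hb0]; simp
  · have h2 : b * (starRingEnd ℂ) a = a * (starRingEnd ℂ) b := by
      have := congrArg (starRingEnd ℂ) hreal
      simp only [map_mul, Complex.conj_conj] at this
      linear_combination this
    apply mul_left_cancel₀ ha0
    calc a * (b' * (starRingEnd ℂ) a) = (b' * a) * (starRingEnd ℂ) a := by ring
    _ = (b * a') * (starRingEnd ℂ) a := by rw [hR]
    _ = a' * (b * (starRingEnd ℂ) a) := by ring
    _ = a' * (a * (starRingEnd ℂ) b) := by rw [h2]
    _ = a * ((starRingEnd ℂ) b * a') := by ring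

lemma chain (e d : ℤ → ℂ) (hR : ∀ j, d (j+1) * e j = e (j+1) * d j)
    (hZ : ∀ j, e j = 0 → d j = 0)
    (hI : ∀ k₁ k₂ k : ℤ, k₁ ≤ k → k ≤ k₂ → e k₁ ≠ 0 → e k₂ ≠ 0 → e k ≠ 0)
    (k₀ : ℤ) (h₀ : e k₀ ≠ 0) : ∀ j, d j * e k₀ = e j * d k₀ := by
  have fwd : ∀ j, k₀ ≤ j → d j * e k₀ = e j * d k₀ := by
    refine Int.le_induction (by ring) ?_
    intro n hn IH
    · by_cases h1 : e (n+1) = 0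
      · rw [h1, hZ _ h1]; ring
      · have hen : e n ≠ 0 := hI k₀ (n+1) n hn (by omega) h₀ h1
        apply mul_right_cancel₀ hen
        linear_combination e k₀ * hR n + e (n+1) * IH
  have bwd : ∀ j, j ≤ k₀ → d j * e k₀ = e j * d k₀ := by
    refine Int.le_induction_down (by ring) ?_
    intro n hn IH
    · by_cases h1 : e (n-1) = 0
      · rw [h1, hZ _ h1]; ring
      · have hen : e n ≠ 0 := hI (n-1) k₀ n (by omega) hn h1 h₀
        have hR' : d n * e (n-1) = e n * d (n-1) := by
          have := hR (n-1); simpa using this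
        apply mul_right_cancel₀ hen
        linear_combination (- e k₀) * hR' + e (n-1) * IH
  intro j
  rcases le_total j k₀ with h | h
  · exact bwd j h
  · exact fwd j h

lemma coeffs_determined (c d : ℤ → ℂ)
    (habs : ∀ k, ‖(d k)‖ = ‖(c k)‖)
    (hre : ∀ k, (d k * (starRingEnd ℂ) (d (k+1))).re = (c k * (starRingEnd ℂ) (c (k+1))).re)
    (hI : ∀ k₁ k₂ k : ℤ, k₁ ≤ k → k ≤ k₂ → c k₁ ≠ 0 → c k₂ ≠ 0 → c k ≠ 0)
    (hsub : {k : ℤ | (c k * (starRingEnd ℂ) (c (k + 1))).im ≠ 0}.Subsingleton)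
    (k₀ : ℤ) (h₀ : c k₀ ≠ 0) :
    ∃ z : ℂ, ‖z‖ = 1 ∧
      ((∀ j, d j = z * c j) ∨ (∀ j, d j = z * (starRingEnd ℂ) (c j))) := by
  have hZ : ∀ j, c j = 0 → d j = 0 := by
    intro j hj
    have := habs j; rw [hj] at this; simpa using this
  have hD : ∀ j, d j * (starRingEnd ℂ) (d (j+1)) = c j * (starRingEnd ℂ) (c (j+1)) ∨
      d j * (starRingEnd ℂ) (d (j+1)) = (starRingEnd ℂ) (c j * (starRingEnd ℂ) (c (j+1))) := by
    intro j
    apply dichotomy _ _ _ (hre j)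
    rw [norm_mul, norm_mul, Complex.norm_conj, Complex.norm_conj, habs, habs]
  have hRj : ∀ j, (c j * (starRingEnd ℂ) (c (j+1))).im = 0 → d (j+1) * c j = c (j+1) * d j := by
    intro j him
    have hwr : (starRingEnd ℂ) (c j * (starRingEnd ℂ) (c (j+1))) = c j * (starRingEnd ℂ) (c (j+1)) :=
      Complex.conj_eq_iff_im.mpr him
    have hDj : d j * (starRingEnd ℂ) (d (j+1)) = c j * (starRingEnd ℂ) (c (j+1)) := by
      rcases hD j with h | h
      · exact h
      · rw [h, hwr]
    exact Rlem (c j) (c (j+1)) (d j) (d (j+1)) (habs j) (habs (j+1)) hDj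
  by_cases hE : ∃ k, (c k * (starRingEnd ℂ) (c (k + 1))).im ≠ 0
  · obtain ⟨ks, hks⟩ := hE
    have hcks : c ks ≠ 0 := by intro h; apply hks; rw [h]; simp
    have hcks1 : c (ks+1) ≠ 0 := by intro h; apply hks; rw [h]; simp
    have honly : ∀ j, j ≠ ks → (c j * (starRingEnd ℂ) (c (j + 1))).im = 0 := by
      intro j hj
      by_contra h
      exact hj (hsub h hks)
    rcases hD ks with hcase | hcase
    · have hR : ∀ j, d (j+1) * c j = c (j+1) * d j := by
        intro j
        by_cases hj : j = ks
        · subst hj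
          exact Rlem (c j) (c (j+1)) (d j) (d (j+1)) (habs j) (habs (j+1)) hcase
        · exact hRj j (honly j hj)
      have hch := chain c d hR hZ hI ks hcks
      refine ⟨d ks / c ks, ?_, Or.inl ?_⟩
      · rw [norm_div, habs, div_self]
        simpa using hcks
      · intro j
        have := hch j
        field_simp
        linear_combination this
    · have hcase' : d ks * (starRingEnd ℂ) (d (ks+1)) = (starRingEnd ℂ) (c ks) * (c (ks+1)) := by
        rw [hcase, map_mul, Complex.conj_conj]
      have hR' : ∀ j, d (j+1) * (starRingEnd ℂ) (c j) = (starRingEnd ℂ) (c (j+1)) * d j := by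
        intro j
        by_cases hj : j = ks
        · subst hj
          exact R'lem (c j) (c (j+1)) (d j) (d (j+1)) (habs j) (habs (j+1)) hcase'
        · have hRjj := hRj j (honly j hj)
          have hreal : c j * (starRingEnd ℂ) (c (j+1)) = (starRingEnd ℂ) (c j) * c (j+1) := by
            have := Complex.conj_eq_iff_im.mpr (honly j hj)
            rw [map_mul, Complex.conj_conj] at this
            linear_combination -this
          exact R'lem2 (c j) (c (j+1)) (d j) (d (j+1)) hRjj hreal (hZ j) (hZ (j+1))
      have hZ' : ∀ j, (starRingEnd ℂ) (c j) = 0 → d j = 0 := by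
        intro j hj
        exact hZ j (by simpa using hj)
      have hI' : ∀ k₁ k₂ k : ℤ, k₁ ≤ k → k ≤ k₂ → (starRingEnd ℂ) (c k₁) ≠ 0 →
          (starRingEnd ℂ) (c k₂) ≠ 0 → (starRingEnd ℂ) (c k) ≠ 0 := by
        intro k₁ k₂ k h1 h2 hc1 hc2
        simpa using hI k₁ k₂ k h1 h2 (by simpa using hc1) (by simpa using hc2)
      have hch := chain (fun j => (starRingEnd ℂ) (c j)) d hR' hZ' hI' ks (by simpa using hcks)
      refine ⟨d ks / (starRingEnd ℂ) (c ks), ?_, Or.inr ?_⟩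
      · rw [norm_div, Complex.norm_conj, habs, div_self]
        simpa using hcks
      · intro j
        have := hch j
        have hcks' : (starRingEnd ℂ) (c ks) ≠ 0 := by simpa using hcks
        field_simp
        linear_combination this
  · push_neg at hE
    have hR : ∀ j, d (j+1) * c j = c (j+1) * d j := fun j => hRj j (hE j)
    have hch := chain c d hR hZ hI k₀ h₀
    refine ⟨d k₀ / c k₀, ?_, Or.inl ?_⟩
    · rw [norm_div, habs, div_self]
      simpa using h₀
    · intro j
      have := hch j
      field_simp
      linear_combination this

lemma exists_coeff_ne_zero (c : ℤ → ℂ) (hc : sisFun c ≠ 0) : ∃ k, c k ≠ 0 := by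
  by_contra h
  push_neg at h
  apply hc
  funext t
  show sisFun c t = 0
  rw [sisFun_eq_pt]
  simp [h]

lemma coeff_of_funeq (c d : ℤ → ℂ) (z : ℂ)
    (h : sisFun d = fun t => z * sisFun c t) : ∀ j : ℤ, d j = z * c j := by
  intro j
  have h2 := congrFun h ((j : ℝ))
  simpa only [sisFun_int] using h2

lemma coeff_of_funeq_conj (c d : ℤ → ℂ) (z : ℂ)
    (h : sisFun d = fun t => z * (starRingEnd ℂ) (sisFun c t)) :
    ∀ j : ℤ, d j = z * (starRingEnd ℂ) (c j) := by
  intro j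
  have h2 := congrFun h ((j : ℝ))
  simpa only [sisFun_int] using h2

lemma gap_noCPR (c : ℤ → ℂ) (k₁ k₂ k : ℤ) (hk1 : k₁ ≤ k) (hk2 : k ≤ k₂)
    (hc1 : c k₁ ≠ 0) (hc2 : c k₂ ≠ 0) (hck : c k = 0)
    (hCPR : ∀ d : ℤ → ℂ,
        (∀ t : ℝ, ‖(sisFun d t)‖ = ‖(sisFun c t)‖) →
        ∃ z : ℂ, ‖z‖ = 1 ∧
          ((sisFun d = fun t => z * sisFun c t) ∨
            (sisFun d = fun t => z * (starRingEnd ℂ) (sisFun c t)))) : False := by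
  have hk1' : k₁ < k := lt_of_le_of_ne hk1 (by rintro rfl; exact hc1 hck)
  have hk2' : k < k₂ := lt_of_le_of_ne hk2 (by rintro rfl; exact hc2 hck)
  set lam₀ : ℂ := c k₁ / (starRingEnd ℂ) (c k₁) * (starRingEnd ℂ) (c k₂) / c k₂ with hlam₀
  set lam : ℂ := if lam₀ = -1 then Complex.I else -1 with hlamdef
  have hlamabs : ‖lam‖ = 1 := by
    rw [hlamdef]; split <;> simp
  have hlamne1 : lam ≠ 1 := by
    rw [hlamdef]; split
    · simp [Complex.ext_iff]
    · norm_num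
  have hlamne : lam ≠ lam₀ := by
    rw [hlamdef]; split
    · rename_i h; rw [h]; simp [Complex.ext_iff]
    · rename_i h; exact fun hh => h hh.symm
  have hnl : lam * (starRingEnd ℂ) lam = 1 := by
    rw [Complex.mul_conj]
    norm_cast
    rw [← Complex.sq_norm, hlamabs]; norm_num
  set d : ℤ → ℂ := fun j => if j ≤ k then c j else lam * c j with hd
  have habs : ∀ j, ‖(d j)‖ = ‖(c j)‖ := by
    intro j
    simp only [hd]
    by_cases h : j ≤ k
    · rw [if_pos h]
    · rw [if_neg h, norm_mul, hlamabs, one_mul]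
  have hre : ∀ j, (d j * (starRingEnd ℂ) (d (j+1))).re = (c j * (starRingEnd ℂ) (c (j+1))).re := by
    intro j
    rcases lt_trichotomy j k with h | h | h
    · simp only [hd]
      simp only [if_pos (show j ≤ k by omega), if_pos (show j + 1 ≤ k by omega)]
    · subst h
      simp only [hd]
      simp only [if_pos le_rfl, hck]
      simp
    · simp only [hd]
      simp only [if_neg (show ¬ j ≤ k by omega), if_neg (show ¬ j + 1 ≤ k by omega)]
      rw [show lam * c j * (starRingEnd ℂ) (lam * c (j+1)) = c j * (starRingEnd ℂ) (c (j+1)) by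
        rw [map_mul]
        linear_combination (c j * (starRingEnd ℂ) (c (j+1))) * hnl]
  obtain ⟨z, hz, hcase⟩ := hCPR d (abs_sisFun_eq c d habs hre)
  rcases hcase with h | h
  · have hco := coeff_of_funeq c d z h
    have h1 := hco k₁
    have h2 := hco k₂
    simp only [hd] at h1 h2
    rw [if_pos hk1] at h1
    rw [if_neg (by omega)] at h2
    have hz1 : z = 1 := mul_right_cancel₀ hc1 (by linear_combination -h1)
    rw [hz1, one_mul] at h2
    exact hlamne1 (mul_right_cancel₀ hc2 (by linear_combination h2))
  · have hco := coeff_of_funeq_conj c d z h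
    have h1 := hco k₁
    have h2 := hco k₂
    simp only [hd] at h1 h2
    rw [if_pos hk1] at h1
    rw [if_neg (by omega)] at h2
    -- h1 : c k₁ = z * conj (c k₁), h2 : lam * c k₂ = z * conj (c k₂)
    apply hlamne
    have hcc1 : (starRingEnd ℂ) (c k₁) ≠ 0 := by simpa using hc1
    have hzval : z = c k₁ / (starRingEnd ℂ) (c k₁) := by
      field_simp
      linear_combination -h1
    rw [hlam₀, ← hzval]
    field_simp
    linear_combination h2

lemma twoflip_noCPR (c : ℤ → ℂ) (a b : ℤ)
    (ha : (c a * (starRingEnd ℂ) (c (a + 1))).im ≠ 0)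
    (hb : (c b * (starRingEnd ℂ) (c (b + 1))).im ≠ 0) (hab : a < b)
    (hCPR : ∀ d : ℤ → ℂ,
        (∀ t : ℝ, ‖(sisFun d t)‖ = ‖(sisFun c t)‖) →
        ∃ z : ℂ, ‖z‖ = 1 ∧
          ((sisFun d = fun t => z * sisFun c t) ∨
            (sisFun d = fun t => z * (starRingEnd ℂ) (sisFun c t)))) : False := by
  have hca : c a ≠ 0 := by intro h; apply ha; rw [h]; simp
  have hca1 : c (a+1) ≠ 0 := by intro h; apply ha; rw [h]; simp
  have hcb : c b ≠ 0 := by intro h; apply hb; rw [h]; simp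
  have hcb1 : c (b+1) ≠ 0 := by intro h; apply hb; rw [h]; simp
  have hcca1 : (starRingEnd ℂ) (c (a+1)) ≠ 0 := by simpa using hca1
  set lam : ℂ := c (a+1) / (starRingEnd ℂ) (c (a+1)) with hlamdef
  have hlamabs : ‖lam‖ = 1 := by
    rw [hlamdef, norm_div, Complex.norm_conj, div_self]
    simpa using hca1
  have hnl : lam * (starRingEnd ℂ) lam = 1 := by
    rw [Complex.mul_conj]
    norm_cast
    rw [← Complex.sq_norm, hlamabs]; norm_num
  have hlamconj : (starRingEnd ℂ) lam = (starRingEnd ℂ) (c (a+1)) / c (a+1) := by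
    rw [hlamdef, map_div₀, Complex.conj_conj]
  set d : ℤ → ℂ := fun j => if j ≤ a then c j else lam * (starRingEnd ℂ) (c j) with hd
  have habs : ∀ j, ‖(d j)‖ = ‖(c j)‖ := by
    intro j
    simp only [hd]
    by_cases h : j ≤ a
    · rw [if_pos h]
    · rw [if_neg h, norm_mul, hlamabs, one_mul, Complex.norm_conj]
  have hre : ∀ j, (d j * (starRingEnd ℂ) (d (j+1))).re = (c j * (starRingEnd ℂ) (c (j+1))).re := by
    intro j
    rcases lt_trichotomy j a with h | h | h
    · simp only [hd]
      simp only [if_pos (show j ≤ a by omega), if_pos (show j + 1 ≤ a by omega)]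
    · subst h
      simp only [hd]
      simp only [if_pos le_rfl, if_neg (show ¬ j + 1 ≤ j by omega)]
      rw [show c j * (starRingEnd ℂ) (lam * (starRingEnd ℂ) (c (j+1)))
            = c j * (starRingEnd ℂ) (c (j+1)) by
        rw [map_mul, Complex.conj_conj, hlamconj]
        field_simp]
    · simp only [hd]
      simp only [if_neg (show ¬ j ≤ a by omega), if_neg (show ¬ j + 1 ≤ a by omega)]
      rw [show lam * (starRingEnd ℂ) (c j) * (starRingEnd ℂ) (lam * (starRingEnd ℂ) (c (j+1)))
            = (starRingEnd ℂ) (c j * (starRingEnd ℂ) (c (j+1))) by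
        rw [map_mul, map_mul, Complex.conj_conj]
        linear_combination ((starRingEnd ℂ) (c j) * c (j+1)) * hnl]
      rw [Complex.conj_re]
  obtain ⟨z, hz, hcase⟩ := hCPR d (abs_sisFun_eq c d habs hre)
  rcases hcase with h | h
  · have hco := coeff_of_funeq c d z h
    have h1 := hco a
    have h2 := hco b
    have h3 := hco (b+1)
    simp only [hd] at h1 h2 h3
    rw [if_pos le_rfl] at h1
    rw [if_neg (by omega)] at h2
    rw [if_neg (by omega)] at h3
    have hz1 : z = 1 := mul_right_cancel₀ hca (by linear_combination -h1)
    rw [hz1, one_mul] at h2 h3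
    -- h2 : lam * conj (c b) = c b, h3 : lam * conj (c (b+1)) = c (b+1)
    apply hb
    apply Complex.conj_eq_iff_im.mp
    rw [map_mul, Complex.conj_conj]
    -- goal : conj (c b) * c (b+1) = c b * conj (c (b+1))
    linear_combination (starRingEnd ℂ) (c (b+1)) * h2 - (starRingEnd ℂ) (c b) * h3
  · have hco := coeff_of_funeq_conj c d z h
    have h1 := hco a
    have h2 := hco (a+1)
    simp only [hd] at h1 h2
    rw [if_pos le_rfl] at h1
    rw [if_neg (by omega)] at h2
    -- h1 : c a = z * conj (c a), h2 : lam * conj (c (a+1)) = z * conj (c (a+1))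
    have hlz : lam = z := mul_right_cancel₀ hcca1 (by linear_combination h2)
    have e2 : z * (starRingEnd ℂ) (c (a+1)) = c (a+1) := by
      rw [← hlz, hlamdef]
      field_simp
    apply ha
    apply Complex.conj_eq_iff_im.mp
    rw [map_mul, Complex.conj_conj]
    linear_combination (-(starRingEnd ℂ) (c a)) * e2 - (starRingEnd ℂ) (c (a+1)) * h1

/-- **Proposition 2.9.**  A nonzero `f = ∑_k c k · h(· - k) ∈ S_ℂ(h)` is complex
conjugate phase retrieval in `S_ℂ(h)` iff (i) the support of `c` is an interval of
integers (i.e. `c k ≠ 0` for every `k` with `K₋ - 1 < k < K₊ + 1`), and (ii) there is at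
most one integer `k` (then necessarily with `K₋ - 1 < k < K₊`) such that
`Im (c k * conj (c (k+1))) ≠ 0`. -/
theorem stmt_8 (c : ℤ → ℂ) (hc : sisFun c ≠ 0) :
    (∀ d : ℤ → ℂ,
        (∀ t : ℝ, ‖(sisFun d t)‖ = ‖(sisFun c t)‖) →
        ∃ z : ℂ, ‖z‖ = 1 ∧
          ((sisFun d = fun t => z * sisFun c t) ∨
            (sisFun d = fun t => z * (starRingEnd ℂ) (sisFun c t)))) ↔
      ((∀ k₁ k₂ k : ℤ, k₁ ≤ k → k ≤ k₂ → c k₁ ≠ 0 → c k₂ ≠ 0 → c k ≠ 0) ∧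
        {k : ℤ | (c k * (starRingEnd ℂ) (c (k + 1))).im ≠ 0}.Subsingleton) := by
  constructor
  · intro hCPR
    constructor
    · intro k₁ k₂ k hk1 hk2 hc1 hc2
      intro hck
      exact gap_noCPR c k₁ k₂ k hk1 hk2 hc1 hc2 hck hCPR
    · intro x hx y hy
      by_contra hxy
      simp only [Set.mem_setOf_eq] at hx hy
      rcases lt_or_gt_of_ne hxy with h | h
      · exact twoflip_noCPR c x y hx hy h hCPR
      · exact twoflip_noCPR c y x hy hx h hCPR
  · rintro ⟨hI, hsub⟩ d hT
    obtain ⟨k₀, h₀⟩ := exists_coeff_ne_zero c hc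
    obtain ⟨z, hz, hcase⟩ := coeffs_determined c d (coeff_abs_of_abs c d hT)
      (coeff_re_of_abs c d hT) hI hsub k₀ h₀
    refine ⟨z, hz, ?_⟩
    rcases hcase with h | h
    · exact Or.inl (sisFun_smul c d z h)
    · exact Or.inr (sisFun_conj c d z h)
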